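/- For continuous functions F, G : [0,∞) → ℂ with |F(s)| ≤ A·e^{νs}/(M₀(1+s²)) and |G(s)| ≤ B·e^{νs}/(M₀(1+s²)) for all s ≥ 0, where M₀ := sup_{s>0} 2(1+s²)(ln(1+s²)+s·arctan s)/(s(s²+4)), the convolution satisfies |∫₀^q F(s)G(q−s) ds| ≤ A·B·e^{νq}/(M₀(1+q²)) for every q ≥ 0. -/

import Mathlib

open MeasureTheory Real Set

/-- The constant `M₀ = sup_{s>0} 2(1+s²)(ln(1+s²)+s arctan s)/(s(s²+4))`. -/
noncomputable def M0 : ℝ :=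
  sSup ((fun s : ℝ =>
      2 * (1 + s ^ 2) * (Real.log (1 + s ^ 2) + s * Real.arctan s) / (s * (s ^ 2 + 4))) ''
    Set.Ioi 0)

lemma phi_bddAbove : BddAbove ((fun s : ℝ =>
      2 * (1 + s ^ 2) * (Real.log (1 + s ^ 2) + s * Real.arctan s) / (s * (s ^ 2 + 4))) ''
    Set.Ioi 0) := by
  refine ⟨4 + π, ?_⟩
  rintro _ ⟨s, hs, rfl⟩
  have hs : (0:ℝ) < s := hs
  have hπ : (0:ℝ) < π := Real.pi_pos
  have hlog : Real.log (1 + s ^ 2) ≤ 2 * s := by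
    have h1 : Real.log (1 + s ^ 2) ≤ Real.log ((1 + s) ^ 2) :=
      Real.log_le_log (by positivity) (by nlinarith)
    have h2 : Real.log ((1 + s) ^ 2) = 2 * Real.log (1 + s) := by
      rw [Real.log_pow]; push_cast; ring
    have h3 : Real.log (1 + s) ≤ s := by
      have := Real.log_le_sub_one_of_pos (show (0:ℝ) < 1 + s by linarith)
      linarith
    linarith
  have harc : Real.arctan s ≤ π / 2 := (Real.arctan_lt_pi_div_two s).le
  have harc0 : 0 ≤ Real.arctan s := by
    rw [← Real.arctan_zero]; exact Real.arctan_strictMono.monotone hs.le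
  rw [div_le_iff₀ (by positivity)]
  have k1 : 0 ≤ (1 + s ^ 2) * (2 * s - Real.log (1 + s ^ 2)) :=
    mul_nonneg (by positivity) (by linarith)
  have k2 : 0 ≤ ((1 + s ^ 2) * s) * (π / 2 - Real.arctan s) :=
    mul_nonneg (by positivity) (by linarith)
  nlinarith [k1, k2, mul_nonneg hs.le hπ.le, sq_nonneg s, mul_nonneg (mul_nonneg hs.le hs.le) hs.le]

lemma M0_ge (s : ℝ) (hs : 0 < s) :
    2 * (1 + s ^ 2) * (Real.log (1 + s ^ 2) + s * Real.arctan s) / (s * (s ^ 2 + 4)) ≤ M0 :=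
  le_csSup phi_bddAbove ⟨s, hs, rfl⟩

lemma M0_pos : 0 < M0 := by
  have h := M0_ge 1 one_pos
  have hlog : 0 < Real.log (1 + 1 ^ 2) := Real.log_pos (by norm_num)
  have harc : 0 < Real.arctan 1 := by
    rw [Real.arctan_one]; positivity
  calc (0:ℝ) < 2 * (1 + 1 ^ 2) * (Real.log (1 + 1 ^ 2) + 1 * Real.arctan 1) / (1 * (1 ^ 2 + 4)) := by
        positivity
    _ ≤ M0 := h

lemma conv_kernel_integral (a : ℝ) (ha : 0 < a) :
    ∫ s in (0:ℝ)..a, ((1 + s ^ 2) * (1 + (a - s) ^ 2))⁻¹ =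
      2 * (Real.log (1 + a ^ 2) + a * Real.arctan a) / (a * (a ^ 2 + 4)) := by
  set α : ℝ := 2 / (a * (4 + a ^ 2)) with hα
  set β : ℝ := 1 / (4 + a ^ 2) with hβ
  have ha4 : a * (4 + a ^ 2) ≠ 0 := by positivity
  set H : ℝ → ℝ := fun s => α / 2 * Real.log (1 + s ^ 2) + β * Real.arctan s
      - α / 2 * Real.log (1 + (a - s) ^ 2) - β * Real.arctan (a - s) with hH
  have hderiv : ∀ s : ℝ, HasDerivAt H (((1 + s ^ 2) * (1 + (a - s) ^ 2))⁻¹) s := by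
    intro s
    have hs1 : (0:ℝ) < 1 + s ^ 2 := by positivity
    have hs2 : (0:ℝ) < 1 + (a - s) ^ 2 := by positivity
    have d1 : HasDerivAt (fun s : ℝ => 1 + s ^ 2) (2 * s) s := by
      simpa using ((hasDerivAt_pow 2 s).const_add 1)
    have d1' : HasDerivAt (fun s : ℝ => Real.log (1 + s ^ 2)) (2 * s / (1 + s ^ 2)) s :=
      d1.log hs1.ne'
    have d2 : HasDerivAt Real.arctan (1 / (1 + s ^ 2)) s := Real.hasDerivAt_arctan s
    have d3 : HasDerivAt (fun s : ℝ => 1 + (a - s) ^ 2) (2 * (a - s) * (-1)) s := by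
      have di : HasDerivAt (fun s : ℝ => a - s) (-1) s := by
        simpa using ((hasDerivAt_id s).const_sub a)
      exact (((hasDerivAt_pow 2 (a - s)).const_add 1).comp s di).congr_deriv (by
        push_cast; ring)
    have d3' : HasDerivAt (fun s : ℝ => Real.log (1 + (a - s) ^ 2))
        (2 * (a - s) * (-1) / (1 + (a - s) ^ 2)) s := d3.log hs2.ne'
    have d4 : HasDerivAt (fun s : ℝ => Real.arctan (a - s)) (1 / (1 + (a - s) ^ 2) * (-1)) s := by
      have di : HasDerivAt (fun s : ℝ => a - s) (-1) s := by
        simpa using ((hasDerivAt_id s).const_sub a)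
      exact (Real.hasDerivAt_arctan (a - s)).comp s di
    have := (((d1'.const_mul (α / 2)).add (d2.const_mul β)).sub
        (d3'.const_mul (α / 2))).sub (d4.const_mul β)
    refine this.congr_deriv ?_
    rw [hα, hβ]
    field_simp
    ring
  have hcont : Continuous fun s : ℝ => ((1 + s ^ 2) * (1 + (a - s) ^ 2))⁻¹ := by
    refine Continuous.inv₀ (by continuity) fun x => by positivity
  rw [intervalIntegral.integral_eq_sub_of_hasDerivAt (fun s _ => hderiv s)
    (hcont.intervalIntegrable 0 a)]
  rw [hH]
  simp only [sub_zero, sub_self, Real.arctan_zero, one_pow]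
  rw [show (1:ℝ) + 0 ^ 2 = 1 by norm_num, Real.log_one]
  rw [hα, hβ]
  field_simp
  ring

theorem stmt_2 (ν A B : ℝ) (hν : 0 < ν) (hA : 0 ≤ A) (hB : 0 ≤ B)
    (F G : ℝ → ℂ) (hFc : ContinuousOn F (Set.Ici 0)) (hGc : ContinuousOn G (Set.Ici 0))
    (hF : ∀ s, 0 ≤ s → ‖F s‖ ≤ A * Real.exp (ν * s) / (M0 * (1 + s ^ 2)))
    (hG : ∀ s, 0 ≤ s → ‖G s‖ ≤ B * Real.exp (ν * s) / (M0 * (1 + s ^ 2))) :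
    ∀ q, 0 ≤ q →
      ‖∫ s in (0:ℝ)..q, F s * G (q - s)‖ ≤ A * B * Real.exp (ν * q) / (M0 * (1 + q ^ 2)) := by
  have hM : 0 < M0 := M0_pos
  intro q hq
  rcases eq_or_lt_of_le hq with rfl | hq'
  · simp only [intervalIntegral.integral_same, norm_zero]
    positivity
  set E : ℝ := A * B * Real.exp (ν * q) with hE
  have hE0 : 0 ≤ E := by positivity
  set C : ℝ := E / M0 ^ 2 with hC
  have hC0 : 0 ≤ C := by positivity
  have hbound_pt : ∀ t ∈ Set.uIoc (0:ℝ) q,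
      ‖F t * G (q - t)‖ ≤ C * ((1 + t ^ 2) * (1 + (q - t) ^ 2))⁻¹ := by
    intro t ht
    rw [Set.uIoc_of_le hq] at ht
    have ht0 : 0 ≤ t := ht.1.le
    have htq : 0 ≤ q - t := by linarith [ht.2]
    have h1 := hF t ht0
    have h2 := hG (q - t) htq
    have hexp : Real.exp (ν * t) * Real.exp (ν * (q - t)) = Real.exp (ν * q) := by
      rw [← Real.exp_add]; ring_nf
    calc ‖F t * G (q - t)‖ = ‖F t‖ * ‖G (q - t)‖ := norm_mul _ _
      _ ≤ (A * Real.exp (ν * t) / (M0 * (1 + t ^ 2))) *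
          (B * Real.exp (ν * (q - t)) / (M0 * (1 + (q - t) ^ 2))) := by
          apply mul_le_mul h1 h2 (norm_nonneg _) (by positivity)
      _ = C * ((1 + t ^ 2) * (1 + (q - t) ^ 2))⁻¹ := by
          rw [hC, hE, ← hexp]
          have h3 : (0:ℝ) < 1 + t ^ 2 := by positivity
          have h4 : (0:ℝ) < 1 + (q - t) ^ 2 := by positivity
          field_simp
  have hcont : Continuous fun s : ℝ => C * ((1 + s ^ 2) * (1 + (q - s) ^ 2))⁻¹ :=
    continuous_const.mul (Continuous.inv₀ (by continuity) fun x => by positivity)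
  have hbd := intervalIntegral.norm_integral_le_abs_of_norm_le
    (f := fun s => F s * G (q - s)) (μ := volume) (a := 0) (b := q)
    ((ae_restrict_iff' measurableSet_uIoc).2 (Filter.Eventually.of_forall hbound_pt))
    (hcont.intervalIntegrable 0 q)
  refine hbd.trans ?_
  rw [intervalIntegral.integral_const_mul, conv_kernel_integral q hq']
  have harc0 : 0 ≤ Real.arctan q := by rw [← Real.arctan_zero]; exact Real.arctan_strictMono.monotone hq
  have hlog0 : 0 ≤ Real.log (1 + q ^ 2) := Real.log_nonneg (by nlinarith)
  have hval0 : 0 ≤ C * (2 * (Real.log (1 + q ^ 2) + q * Real.arctan q) / (q * (q ^ 2 + 4))) := by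
    have : 0 ≤ Real.log (1 + q ^ 2) + q * Real.arctan q := by positivity
    positivity
  rw [abs_of_nonneg hval0]
  have hI : 2 * (Real.log (1 + q ^ 2) + q * Real.arctan q) / (q * (q ^ 2 + 4)) ≤
      M0 / (1 + q ^ 2) := by
    have hfq := M0_ge q hq'
    rw [div_le_iff₀ (by positivity)] at hfq ⊢
    rw [div_mul_eq_mul_div, le_div_iff₀ (by positivity)]
    nlinarith [hfq]
  calc C * (2 * (Real.log (1 + q ^ 2) + q * Real.arctan q) / (q * (q ^ 2 + 4)))
      ≤ C * (M0 / (1 + q ^ 2)) := by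
        exact mul_le_mul_of_nonneg_left hI hC0
    _ = E / (M0 * (1 + q ^ 2)) := by
        rw [hC]
        field_simp
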